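/- For every n ≥ 1 and every y = (y_0,…,y_n) ∈ {−1,1}^{n+1}, the ratio of partition functions satisfies Z_{0,n}(y_0,…,y_n) / Z_{1,n}(y_1,…,y_n) = cosh(w_0^{(n)})·exp(B(w_1^{(n)})) / cosh(w_1^{(n)}); consequently the conditional probability Q(y_0 | y_1,…,y_n) of the hidden Markov process equals (1/λ)·cosh(w_0^{(n)})·exp(B(w_1^{(n)}))/cosh(w_1^{(n)}). -/

import Mathlib

open Finset


lemma stmt12_key (J : ℝ) (A B : ℝ → ℝ)
    (hA : ∀ u, A u = (1 / 2) * Real.log (Real.cosh (u + J) / Real.cosh (u - J)))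
    (hB : ∀ u, B u = (1 / 2) * Real.log (4 * Real.cosh (u + J) * Real.cosh (u - J)))
    (v t : ℝ) (ht : t = 1 ∨ t = -1) :
    Real.exp (J * t + v) + Real.exp (-(J * t + v)) = Real.exp (A v * t + B v) := by
  have ha : (0:ℝ) < Real.cosh (v + J) := Real.cosh_pos _
  have hb : (0:ℝ) < Real.cosh (v - J) := Real.cosh_pos _
  rcases ht with rfl | rfl
  · have h1 : A v * 1 + B v = Real.log (2 * Real.cosh (v + J)) := by
      rw [hA, hB, mul_one, ← mul_add,
        ← Real.log_mul (by positivity) (by positivity)]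
      have h2 : Real.cosh (v + J) / Real.cosh (v - J) *
          (4 * Real.cosh (v + J) * Real.cosh (v - J)) = (2 * Real.cosh (v + J)) ^ 2 := by
        field_simp; ring
      rw [h2, Real.log_pow]
      push_cast; ring
    rw [show J * 1 + v = v + J by ring, h1, Real.exp_log (by positivity), Real.cosh_eq]
    ring
  · have h1 : A v * (-1) + B v = Real.log (2 * Real.cosh (v - J)) := by
      rw [hA, hB]
      rw [show (1/2) * Real.log (Real.cosh (v + J) / Real.cosh (v - J)) * (-1)
          + (1/2) * Real.log (4 * Real.cosh (v + J) * Real.cosh (v - J))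
          = (1/2) * (Real.log (4 * Real.cosh (v + J) * Real.cosh (v - J))
            - Real.log (Real.cosh (v + J) / Real.cosh (v - J))) by ring,
        ← Real.log_div (by positivity) (by positivity)]
      have h2 : 4 * Real.cosh (v + J) * Real.cosh (v - J) /
          (Real.cosh (v + J) / Real.cosh (v - J)) = (2 * Real.cosh (v - J)) ^ 2 := by
        field_simp; ring
      rw [h2, Real.log_pow]
      push_cast; ring
    rw [show J * (-1) + v = v - J by ring, h1, Real.exp_log (by positivity), Real.cosh_eq]
    ring


lemma stmt12_chain (J : ℝ) (A B : ℝ → ℝ)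
    (key : ∀ (v t : ℝ), t = 1 ∨ t = -1 →
      Real.exp (J * t + v) + Real.exp (-(J * t + v)) = Real.exp (A v * t + B v)) :
    ∀ (N : ℕ) (c v : ℕ → ℝ), v N = c N → (∀ i, i < N → v i = c i + A (v (i + 1))) →
    (∑ x : Fin (N + 1) → Bool,
      Real.exp (J * ∑ i : Fin N, (if x i.castSucc then (1:ℝ) else -1) *
          (if x i.succ then (1:ℝ) else -1)
        + ∑ i : Fin (N + 1), c i * (if x i then (1:ℝ) else -1)))
    = 2 * Real.cosh (v 0) * Real.exp (∑ i ∈ Finset.range N, B (v (i + 1))) := by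
  intro N
  induction N with
  | zero =>
    intro c v hvN _
    have h1 : ∀ x : Fin (0 + 1) → Bool,
        Real.exp (J * ∑ i : Fin 0, (if x i.castSucc then (1:ℝ) else -1) *
            (if x i.succ then (1:ℝ) else -1)
          + ∑ i : Fin (0 + 1), c i * (if x i then (1:ℝ) else -1))
        = Real.exp (c 0 * (if x 0 then (1:ℝ) else -1)) := by
      intro x
      simp [Fin.sum_univ_one]
    rw [Fintype.sum_congr _ _ h1]
    rw [Fintype.sum_equiv (Equiv.funUnique (Fin 1) Bool)
      (fun x : Fin (0 + 1) → Bool => Real.exp (c 0 * (if x 0 then (1:ℝ) else -1)))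
      (fun b : Bool => Real.exp (c 0 * (if b then (1:ℝ) else -1))) (fun x => rfl)]
    rw [Fintype.sum_bool]
    simp only [if_true, if_false, Bool.false_eq_true, Finset.range_zero, Finset.sum_empty,
      Real.exp_zero, mul_one]
    rw [Real.cosh_eq, hvN, show c 0 * -1 = -(c 0) by ring]
    ring
  | succ N ih =>
    intro c v hvN hrec
    rw [← Equiv.sum_comp (Fin.consEquiv (fun _ : Fin (N + 2) => Bool))]
    rw [Fintype.sum_prod_type]
    have hx : ∀ (b : Bool) (z : Fin (N + 1) → Bool),
        (J * ∑ i : Fin (N + 1),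
            (if (Fin.cons b z : ∀ _ : Fin (N + 2), Bool) i.castSucc then (1:ℝ) else -1) *
            (if (Fin.cons b z : ∀ _ : Fin (N + 2), Bool) i.succ then (1:ℝ) else -1)
          + ∑ i : Fin (N + 2), c i *
            (if (Fin.cons b z : ∀ _ : Fin (N + 2), Bool) i then (1:ℝ) else -1))
        = c 0 * (if b then (1:ℝ) else -1)
          + (J * ∑ i : Fin N, (if z i.castSucc then (1:ℝ) else -1) *
              (if z i.succ then (1:ℝ) else -1)
            + ∑ i : Fin (N + 1),
              (if (i : ℕ) = 0 then c 1 + J * (if b then (1:ℝ) else -1) else c ((i : ℕ) + 1))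
                * (if z i then (1:ℝ) else -1)) := by
      intro b z
      simp only [Fin.sum_univ_succ, Fin.castSucc_zero, Fin.cons_zero, Fin.cons_succ,
        ← Fin.succ_castSucc, Fin.val_succ, Fin.val_zero, Nat.succ_ne_zero, if_false, if_true,
        Nat.add_one_ne_zero, reduceIte]
      ring
    -- rewrite each configuration's weight and apply the IH for each value of `b`
    have hb : ∀ b : Bool,
        (∑ z : Fin (N + 1) → Bool,
          Real.exp (J * ∑ i : Fin (N + 1),
              (if (Fin.cons b z : ∀ _ : Fin (N + 2), Bool) i.castSucc then (1:ℝ) else -1) *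
              (if (Fin.cons b z : ∀ _ : Fin (N + 2), Bool) i.succ then (1:ℝ) else -1)
            + ∑ i : Fin (N + 2), c i *
              (if (Fin.cons b z : ∀ _ : Fin (N + 2), Bool) i then (1:ℝ) else -1)))
        = Real.exp (c 0 * (if b then (1:ℝ) else -1)) *
            (2 * Real.cosh (v 1 + J * (if b then (1:ℝ) else -1)) *
              Real.exp (∑ i ∈ Finset.range N, B (v (i + 2)))) := by
      intro b
      have step1 : (∑ z : Fin (N + 1) → Bool,
          Real.exp (J * ∑ i : Fin (N + 1),
              (if (Fin.cons b z : ∀ _ : Fin (N + 2), Bool) i.castSucc then (1:ℝ) else -1) *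
              (if (Fin.cons b z : ∀ _ : Fin (N + 2), Bool) i.succ then (1:ℝ) else -1)
            + ∑ i : Fin (N + 2), c i *
              (if (Fin.cons b z : ∀ _ : Fin (N + 2), Bool) i then (1:ℝ) else -1)))
          = Real.exp (c 0 * (if b then (1:ℝ) else -1)) *
            ∑ z : Fin (N + 1) → Bool,
              Real.exp (J * ∑ i : Fin N, (if z i.castSucc then (1:ℝ) else -1) *
                  (if z i.succ then (1:ℝ) else -1)
                + ∑ i : Fin (N + 1),
                  (if (i : ℕ) = 0 then c 1 + J * (if b then (1:ℝ) else -1) else c ((i : ℕ) + 1))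
                    * (if z i then (1:ℝ) else -1)) := by
        rw [Finset.mul_sum]
        refine Finset.sum_congr rfl (fun z _ => ?_)
        rw [hx b z, Real.exp_add]
      rw [step1]
      have hih := ih
        (fun j => if j = 0 then c 1 + J * (if b then (1:ℝ) else -1) else c (j + 1))
        (fun j => if j = 0 then v 1 + J * (if b then (1:ℝ) else -1) else v (j + 1))
        (by
          by_cases hN : N = 0
          · subst hN
            simp only [reduceIte]
            rw [show v 1 = c 1 from hvN]
          · simp only [if_neg hN]
            exact hvN)
        (by
          intro i hi
          by_cases hi0 : i = 0
          · subst hi0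
            have h1 : v 1 = c 1 + A (v 2) := hrec 1 (by omega)
            simp only [reduceIte, Nat.add_one_ne_zero, if_false]
            rw [h1]; ring
          · have h1 : v (i + 1) = c (i + 1) + A (v (i + 2)) := hrec (i + 1) (by omega)
            simp only [if_neg hi0, if_neg (show i + 1 ≠ 0 by omega)]
            rw [h1])
      rw [hih]
      have hne : ∀ i : ℕ, (i + 1 = 0) = False := fun i => by simp
      simp only [reduceIte, hne, if_false]
    simp only [Fin.consEquiv_apply]
    rw [Finset.sum_congr rfl fun b _ => hb b]
    rw [Fintype.sum_bool]
    simp only [if_true, if_false, Bool.false_eq_true]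
    have hkey' : ∀ t : ℝ, t = 1 ∨ t = -1 →
        2 * Real.cosh (v 1 + J * t) = Real.exp (A (v 1) * t + B (v 1)) := by
      intro t ht
      rw [← key (v 1) t ht, Real.cosh_eq, show v 1 + J * t = J * t + v 1 by ring]
      ring
    rw [hkey' 1 (Or.inl rfl), hkey' (-1) (Or.inr rfl), Finset.sum_range_succ']
    have h0 : v 0 = c 0 + A (v 1) := hrec 0 (by omega)
    rw [h0]
    simp only [Real.cosh_eq, Real.exp_add, Real.exp_neg, mul_one, mul_neg_one, neg_add,
      show ∀ k : ℕ, k + 1 + 1 = k + 2 from fun k => rfl, show (0:ℕ) + 1 = 1 from rfl]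
    have h1 := Real.exp_ne_zero (c 0)
    have h2 := Real.exp_ne_zero (A (v 1))
    field_simp


/-- For every `n ≥ 1` (encoded `n = m + 1`) and every
`y = (y_0,…,y_n) ∈ {−1,1}^{n+1}`, the ratio of partition functions satisfies
`Z_{0,n}(y_0,…,y_n) / Z_{1,n}(y_1,…,y_n) = cosh(w_0^{(n)})·exp(B(w_1^{(n)}))/cosh(w_1^{(n)})`;
consequently the conditional probability
`Q(y_0 | y_1,…,y_n) = Q(y_0,…,y_n)/Q(y_1,…,y_n)` equals
`(1/λ)·cosh(w_0^{(n)})·exp(B(w_1^{(n)}))/cosh(w_1^{(n)})`,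
with `Q(y_m,…,y_n) = (cosh(J)/λ^{n−m+1})·Z_{m,n}(y)`. Spin configurations
`x ∈ {−1,1}^{N}` are encoded by `x : Fin N → Bool` via `spin`. -/
theorem stmt_12 (p ε : ℝ) (hp0 : 0 < p) (hp1 : p < 1) (hε0 : 0 < ε) (hε1 : ε < 1)
    (J K lam : ℝ)
    (hJ : J = (1 / 2) * Real.log ((1 - p) / p))
    (hK : K = (1 / 2) * Real.log ((1 - ε) / ε))
    (hlam : lam = 4 * Real.cosh J * Real.cosh K)
    (A B : ℝ → ℝ)
    (hA : ∀ u, A u = (1 / 2) * Real.log (Real.cosh (u + J) / Real.cosh (u - J)))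
    (hB : ∀ u, B u = (1 / 2) * Real.log (4 * Real.cosh (u + J) * Real.cosh (u - J)))
    (spin : Bool → ℝ) (hspin : ∀ b, spin b = if b then 1 else -1)
    (m n : ℕ) (hn : n = m + 1)
    (y : ℕ → ℝ) (hy : ∀ i, i ≤ n → y i = 1 ∨ y i = -1)
    (w : ℕ → ℝ)
    (hw0 : ∀ i : ℕ, n < i → w i = 0)
    (hwrec : ∀ i : ℕ, i ≤ n → w i = K * y i + A (w (i + 1))) :
    ((∑ x : Fin (m + 2) → Bool,
        Real.exp (J * ∑ i : Fin (m + 1), spin (x i.castSucc) * spin (x i.succ)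
          + K * ∑ i : Fin (m + 2), spin (x i) * y i))
      / (∑ x : Fin (m + 1) → Bool,
        Real.exp (J * ∑ i : Fin m, spin (x i.castSucc) * spin (x i.succ)
          + K * ∑ i : Fin (m + 1), spin (x i) * y (1 + i)))
      = Real.cosh (w 0) * Real.exp (B (w 1)) / Real.cosh (w 1)) ∧
    ((Real.cosh J / lam ^ (n + 1) *
        ∑ x : Fin (m + 2) → Bool,
          Real.exp (J * ∑ i : Fin (m + 1), spin (x i.castSucc) * spin (x i.succ)
            + K * ∑ i : Fin (m + 2), spin (x i) * y i))
      / (Real.cosh J / lam ^ n *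
        ∑ x : Fin (m + 1) → Bool,
          Real.exp (J * ∑ i : Fin m, spin (x i.castSucc) * spin (x i.succ)
            + K * ∑ i : Fin (m + 1), spin (x i) * y (1 + i)))
      = (1 / lam) * Real.cosh (w 0) * Real.exp (B (w 1)) / Real.cosh (w 1)) := by
  
  subst hn
  have key := stmt12_key J A B hA hB
  have hA0 : A 0 = 0 := by
    rw [hA]
    rw [zero_add, zero_sub, Real.cosh_neg, div_self (Real.cosh_pos (x := J)).ne']
    simp
  have h1 : w (m + 1) = K * y (m + 1) := by
    rw [hwrec (m + 1) le_rfl, hw0 (m + 2) (by omega), hA0, add_zero]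
  have hnum := stmt12_chain J A B key (m + 1) (fun i => K * y i) w h1
    (fun i hi => hwrec i (by omega))
  have hden := stmt12_chain J A B key m (fun i => K * y (1 + i)) (fun i => w (1 + i))
    (by simpa [show 1 + m = m + 1 by omega] using h1)
    (fun i hi => hwrec (1 + i) (by omega))
  have hZ0 : (∑ x : Fin (m + 2) → Bool,
        Real.exp (J * ∑ i : Fin (m + 1), spin (x i.castSucc) * spin (x i.succ)
          + K * ∑ i : Fin (m + 2), spin (x i) * y i))
      = 2 * Real.cosh (w 0) * Real.exp (∑ i ∈ Finset.range (m + 1), B (w (i + 1))) := by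
    rw [← hnum]
    refine Fintype.sum_congr _ _ fun x => ?_
    congr 1
    congr 1
    · simp only [hspin]
    · rw [Finset.mul_sum]
      refine Finset.sum_congr rfl fun i _ => ?_
      simp only [hspin]; ring
  have hZ1 : (∑ x : Fin (m + 1) → Bool,
        Real.exp (J * ∑ i : Fin m, spin (x i.castSucc) * spin (x i.succ)
          + K * ∑ i : Fin (m + 1), spin (x i) * y (1 + i)))
      = 2 * Real.cosh (w 1) * Real.exp (∑ i ∈ Finset.range m, B (w (i + 2))) := by
    rw [show (2:ℝ) * Real.cosh (w 1) * Real.exp (∑ i ∈ Finset.range m, B (w (i + 2)))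
        = 2 * Real.cosh (w (1 + 0)) * Real.exp (∑ i ∈ Finset.range m, B (w (1 + (i + 1)))) by
      simp only [show ∀ i : ℕ, 1 + (i + 1) = i + 2 from fun i => by omega,
        show (1:ℕ) + 0 = 1 from rfl]]
    rw [← hden]
    refine Fintype.sum_congr _ _ fun x => ?_
    congr 1
    congr 1
    · simp only [hspin]
    · rw [Finset.mul_sum]
      refine Finset.sum_congr rfl fun i _ => ?_
      simp only [hspin]; ring
  have hS : (∑ i ∈ Finset.range (m + 1), B (w (i + 1)))
      = (∑ i ∈ Finset.range m, B (w (i + 2))) + B (w 1) := by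
    rw [Finset.sum_range_succ']
  have hcosh1 : Real.cosh (w 1) ≠ 0 := (Real.cosh_pos _).ne'
  have hE : Real.exp (∑ i ∈ Finset.range m, B (w (i + 2))) ≠ 0 := Real.exp_ne_zero _
  constructor
  · rw [hZ0, hZ1, hS, Real.exp_add]
    field_simp
  · rw [hZ0, hZ1, hS, Real.exp_add]
    have hlam0 : (0:ℝ) < lam := by rw [hlam]; positivity
    have hcoshJ : Real.cosh J ≠ 0 := (Real.cosh_pos _).ne'
    rw [pow_succ]
    field_simp
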